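/- Let 0 < ρ < 2, b₀ > 0 and T > 0. Then there exists a constant C > 0, depending only on ρ, b₀, T, such that for every measurable f : ℝ → ℂ, ∫₀^T ( ∫_{|k|>1} e^{−2k²b₀t} |f(k)|² dk )^{1/2} dt ≤ C · ( ∫_ℝ (1+k²)^{−ρ} |f(k)|² dk )^{1/2}. -/
import Mathlib
open MeasureTheory Real
open scoped ENNReal

lemma aux_exp (ρ : ℝ) (hρ0 : 0 < ρ) (hρ2 : ρ < 2) {x : ℝ} (hx : 0 < x) :
    Real.exp (-x) ≤ 5 * x ^ (-ρ) := by
  have hxρ : x ^ ρ ≤ 1 + x ^ 2 := by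
    rcases le_total x 1 with h | h
    · have := Real.rpow_le_one hx.le h hρ0.le
      nlinarith [sq_nonneg x]
    · have h1 := Real.rpow_le_rpow_of_exponent_le h hρ2.le
      rw [show ((2:ℝ)) = ((2:ℕ):ℝ) by norm_num, Real.rpow_natCast] at h1
      linarith
  have hx2 : x ^ 2 ≤ 4 * Real.exp x := by
    have h1 : x / 2 + 1 ≤ Real.exp (x / 2) := Real.add_one_le_exp _
    have h2 : Real.exp x = Real.exp (x / 2) ^ 2 := by
      rw [sq, ← Real.exp_add]; ring_nf
    nlinarith [sq_nonneg (x/2 + 1)]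
  have hρpos : 0 < x ^ ρ := Real.rpow_pos_of_pos hx ρ
  have hprod : Real.exp (-x) * Real.exp x = 1 := by
    rw [← Real.exp_add]; simp
  have hle1 : Real.exp (-x) ≤ 1 := Real.exp_le_one_iff.2 (by linarith)
  have hpos : 0 < Real.exp (-x) := Real.exp_pos _
  rw [Real.rpow_neg hx.le, mul_comm (5:ℝ), inv_mul_eq_div, le_div_iff₀ hρpos]
  have key : Real.exp (-x) * x ^ ρ ≤ Real.exp (-x) * (1 + x ^ 2) :=
    mul_le_mul_of_nonneg_left hxρ hpos.le
  have key2 : Real.exp (-x) * x ^ 2 ≤ Real.exp (-x) * (4 * Real.exp x) :=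
    mul_le_mul_of_nonneg_left hx2 hpos.le
  nlinarith

theorem boosted_trace_estimate (ρ b₀ T : ℝ) (hρ0 : 0 < ρ) (hρ2 : ρ < 2)
    (hb : 0 < b₀) (hT : 0 < T) :
    ∃ C : ℝ, 0 < C ∧ ∀ f : ℝ → ℂ, Measurable f →
      ∫⁻ t in Set.Ioc (0 : ℝ) T,
          (∫⁻ k in {k : ℝ | 1 < |k|},
            ENNReal.ofReal (Real.exp (-2 * k ^ 2 * b₀ * t) * ‖f k‖ ^ 2)) ^ ((1 : ℝ) / 2)
        ≤ ENNReal.ofReal C *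
          (∫⁻ k : ℝ, ENNReal.ofReal ((1 + k ^ 2) ^ (-ρ) * ‖f k‖ ^ 2)) ^ ((1 : ℝ) / 2) := by
  set A : ℝ := 5 * 2 ^ ρ * (2 * b₀) ^ (-ρ) with hA
  have hApos : 0 < A := by
    apply mul_pos (mul_pos (by norm_num) (Real.rpow_pos_of_pos (by norm_num) ρ))
    exact Real.rpow_pos_of_pos (by linarith) _
  set J : ℝ := ∫ t in Set.Ioo (0:ℝ) T, t ^ (-(ρ/2)) with hJ
  have hJint : IntegrableOn (fun t : ℝ => t ^ (-(ρ/2))) (Set.Ioo (0:ℝ) T) :=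
    (intervalIntegral.integrableOn_Ioo_rpow_iff hT).2 (by linarith)
  have hJnonneg : 0 ≤ J := by
    apply integral_nonneg_of_ae
    filter_upwards [ae_restrict_mem measurableSet_Ioo] with t ht
    have : (0:ℝ) < t := ht.1
    positivity
  refine ⟨A ^ ((1:ℝ)/2) * J + 1, by positivity, ?_⟩
  intro f hf
  set I : ℝ≥0∞ := ∫⁻ k : ℝ, ENNReal.ofReal ((1 + k ^ 2) ^ (-ρ) * ‖f k‖ ^ 2) with hI
  by_cases hItop : I = ⊤
  · rw [hItop, ENNReal.top_rpow_of_pos (by norm_num),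
      ENNReal.mul_top (by simp [ENNReal.ofReal_eq_zero]; positivity)]
    exact le_top
  have hI12 : I ^ ((1:ℝ)/2) ≠ ⊤ := ENNReal.rpow_ne_top_of_nonneg (by norm_num) hItop
  -- pointwise bound for inner integral
  have inner_bound : ∀ t ∈ Set.Ioc (0:ℝ) T,
      (∫⁻ k in {k : ℝ | 1 < |k|},
        ENNReal.ofReal (Real.exp (-2 * k ^ 2 * b₀ * t) * ‖f k‖ ^ 2))
      ≤ ENNReal.ofReal (A * t ^ (-ρ)) * I := by
    intro t ht
    have ht0 : 0 < t := ht.1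
    have step1 : (∫⁻ k in {k : ℝ | 1 < |k|},
        ENNReal.ofReal (Real.exp (-2 * k ^ 2 * b₀ * t) * ‖f k‖ ^ 2))
        ≤ ∫⁻ k in {k : ℝ | 1 < |k|},
            ENNReal.ofReal (A * t ^ (-ρ)) * ENNReal.ofReal ((1 + k ^ 2) ^ (-ρ) * ‖f k‖ ^ 2) := by
      apply setLIntegral_mono
      · fun_prop
      · intro k hk
        have hk1 : 1 < |k| := hk
        have hk2 : 1 ≤ k ^ 2 := by
          have h := sq_abs k
          nlinarith [hk1]
        rw [← ENNReal.ofReal_mul (by positivity)]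
        apply ENNReal.ofReal_le_ofReal
        rw [show A * t ^ (-ρ) * ((1 + k ^ 2) ^ (-ρ) * ‖f k‖ ^ 2)
            = (A * t ^ (-ρ) * (1 + k ^ 2) ^ (-ρ)) * ‖f k‖ ^ 2 by ring]
        apply mul_le_mul_of_nonneg_right ?_ (by positivity : (0:ℝ) ≤ ‖f k‖ ^ 2)
        have hx : (0:ℝ) < 2 * b₀ * t * k ^ 2 := by positivity
        have h1 : Real.exp (-2 * k ^ 2 * b₀ * t) ≤ 5 * (2 * b₀ * t * k ^ 2) ^ (-ρ) := by
          have := aux_exp ρ hρ0 hρ2 hx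
          convert this using 2
          ring
        have h2 : (2 * b₀ * t * k ^ 2) ^ (-ρ)
            = (2 * b₀) ^ (-ρ) * t ^ (-ρ) * (k ^ 2) ^ (-ρ) := by
          rw [Real.mul_rpow (by positivity) (by positivity),
            Real.mul_rpow (by positivity) (by positivity)]
        have h3 : (k ^ 2 : ℝ) ^ (-ρ) ≤ 2 ^ ρ * (1 + k ^ 2) ^ (-ρ) := by
          have hle : (1 + k ^ 2 : ℝ) ≤ 2 * k ^ 2 := by linarith
          have hmono := Real.rpow_le_rpow_of_nonpos (by positivity : (0:ℝ) < 1 + k^2) hle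
            (by linarith : -ρ ≤ 0)
          calc (k ^ 2 : ℝ) ^ (-ρ) = 2 ^ ρ * (2 * k ^ 2) ^ (-ρ) := by
                rw [Real.mul_rpow (by norm_num) (by positivity), ← mul_assoc,
                  ← Real.rpow_add (by norm_num : (0:ℝ) < 2)]
                simp
            _ ≤ 2 ^ ρ * (1 + k ^ 2) ^ (-ρ) :=
                mul_le_mul_of_nonneg_left hmono (by positivity)
        calc Real.exp (-2 * k ^ 2 * b₀ * t)
            ≤ 5 * ((2 * b₀) ^ (-ρ) * t ^ (-ρ) * (k ^ 2) ^ (-ρ)) := by rw [← h2]; exact h1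
          _ ≤ 5 * ((2 * b₀) ^ (-ρ) * t ^ (-ρ) * (2 ^ ρ * (1 + k ^ 2) ^ (-ρ))) := by
              apply mul_le_mul_of_nonneg_left ?_ (by norm_num)
              apply mul_le_mul_of_nonneg_left h3 (by positivity)
          _ = A * t ^ (-ρ) * (1 + k ^ 2) ^ (-ρ) := by rw [hA]; ring
    refine step1.trans ?_
    rw [lintegral_const_mul' _ _ ENNReal.ofReal_ne_top]
    exact mul_le_mul_right ((lintegral_mono_set (Set.subset_univ _)).trans_eq (by rw [Measure.restrict_univ])) _
  -- outer integral
  have outer : ∫⁻ t in Set.Ioc (0:ℝ) T,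
      (∫⁻ k in {k : ℝ | 1 < |k|},
        ENNReal.ofReal (Real.exp (-2 * k ^ 2 * b₀ * t) * ‖f k‖ ^ 2)) ^ ((1:ℝ)/2)
      ≤ ∫⁻ t in Set.Ioc (0:ℝ) T,
          ENNReal.ofReal (A ^ ((1:ℝ)/2) * t ^ (-(ρ/2))) * I ^ ((1:ℝ)/2) := by
    apply setLIntegral_mono
    · fun_prop
    · intro t ht
      have ht0 : 0 < t := ht.1
      calc (∫⁻ k in {k : ℝ | 1 < |k|},
            ENNReal.ofReal (Real.exp (-2 * k ^ 2 * b₀ * t) * ‖f k‖ ^ 2)) ^ ((1:ℝ)/2)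
          ≤ (ENNReal.ofReal (A * t ^ (-ρ)) * I) ^ ((1:ℝ)/2) :=
            ENNReal.rpow_le_rpow (inner_bound t ht) (by norm_num)
        _ = ENNReal.ofReal (A * t ^ (-ρ)) ^ ((1:ℝ)/2) * I ^ ((1:ℝ)/2) :=
            ENNReal.mul_rpow_of_nonneg _ _ (by norm_num)
        _ = ENNReal.ofReal (A ^ ((1:ℝ)/2) * t ^ (-(ρ/2))) * I ^ ((1:ℝ)/2) := by
            rw [ENNReal.ofReal_rpow_of_nonneg (by positivity) (by norm_num)]
            congr 1
            rw [Real.mul_rpow hApos.le (by positivity), ← Real.rpow_mul ht0.le]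
            ring_nf
  refine outer.trans ?_
  rw [lintegral_mul_const' _ _ hI12]
  apply mul_le_mul_left ?_ _
  have hIoc : ∫⁻ t in Set.Ioc (0:ℝ) T, ENNReal.ofReal (A ^ ((1:ℝ)/2) * t ^ (-(ρ/2)))
      = ∫⁻ t in Set.Ioo (0:ℝ) T, ENNReal.ofReal (A ^ ((1:ℝ)/2) * t ^ (-(ρ/2))) := by
    exact (setLIntegral_congr (Ioo_ae_eq_Ioc (μ := volume) (a := 0) (b := T))).symm
  rw [hIoc, ← ofReal_integral_eq_lintegral_ofReal (hJint.const_mul _)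
    (ae_restrict_of_forall_mem measurableSet_Ioo (fun t ht => by
      have : (0:ℝ) < t := ht.1; positivity))]
  rw [integral_const_mul]
  exact ENNReal.ofReal_le_ofReal (by linarith)
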